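/- Let μ be a σ-finite (finite) measure on 𝔐 and D : Ω → Mat_d(ℂ) measurable with D(t) ≥ 0 for all t. Then L²_D := { classes of g ∈ (L²(μ))^d with g(t) ∈ Ran D(t) for μ-a.e. t } is a closed linear subspace of the Hilbert space (L²(μ))^d. -/

import Mathlib

open MeasureTheory Matrix
open scoped ComplexOrder

/-- For a finite measure `μ` and a measurable `D : Ω → Mat_d(ℂ)` with
`D t ≥ 0`, the set `L²_D` of classes `g ∈ (L²(μ))^d` (realized as the Hilbert space
`Lp (EuclideanSpace ℂ (Fin d)) 2 μ`) with `g t ∈ Ran (D t)` for `μ`-a.e. `t` is a closed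
linear subspace. -/
theorem rangeD_closed_subspace
    {Ω : Type*} [MeasurableSpace Ω] {d : ℕ}
    (μ : Measure Ω) [IsFiniteMeasure μ]
    (D : Ω → Matrix (Fin d) (Fin d) ℂ)
    (hDmeas : ∀ i j, Measurable fun t => D t i j)
    (hDpos : ∀ t, (D t).PosSemidef) :
    IsClosed {g : Lp (EuclideanSpace ℂ (Fin d)) 2 μ |
        ∀ᵐ t ∂μ, ∃ v : Fin d → ℂ, (D t) *ᵥ v = WithLp.equiv 2 (Fin d → ℂ) (g t)} ∧
    (0 : Lp (EuclideanSpace ℂ (Fin d)) 2 μ) ∈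
      {g : Lp (EuclideanSpace ℂ (Fin d)) 2 μ |
        ∀ᵐ t ∂μ, ∃ v : Fin d → ℂ, (D t) *ᵥ v = WithLp.equiv 2 (Fin d → ℂ) (g t)} ∧
    (∀ g₁ g₂ : Lp (EuclideanSpace ℂ (Fin d)) 2 μ,
      g₁ ∈ {g : Lp (EuclideanSpace ℂ (Fin d)) 2 μ |
        ∀ᵐ t ∂μ, ∃ v : Fin d → ℂ, (D t) *ᵥ v = WithLp.equiv 2 (Fin d → ℂ) (g t)} →
      g₂ ∈ {g : Lp (EuclideanSpace ℂ (Fin d)) 2 μ |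
        ∀ᵐ t ∂μ, ∃ v : Fin d → ℂ, (D t) *ᵥ v = WithLp.equiv 2 (Fin d → ℂ) (g t)} →
      g₁ + g₂ ∈ {g : Lp (EuclideanSpace ℂ (Fin d)) 2 μ |
        ∀ᵐ t ∂μ, ∃ v : Fin d → ℂ, (D t) *ᵥ v = WithLp.equiv 2 (Fin d → ℂ) (g t)}) ∧
    (∀ (c : ℂ) (g₁ : Lp (EuclideanSpace ℂ (Fin d)) 2 μ),
      g₁ ∈ {g : Lp (EuclideanSpace ℂ (Fin d)) 2 μ |
        ∀ᵐ t ∂μ, ∃ v : Fin d → ℂ, (D t) *ᵥ v = WithLp.equiv 2 (Fin d → ℂ) (g t)} →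
      c • g₁ ∈ {g : Lp (EuclideanSpace ℂ (Fin d)) 2 μ |
        ∀ᵐ t ∂μ, ∃ v : Fin d → ℂ, (D t) *ᵥ v = WithLp.equiv 2 (Fin d → ℂ) (g t)}) := by
  refine ⟨?_, ?_, ?_, ?_⟩
  · -- closedness
    apply IsSeqClosed.isClosed
    intro f g hf hfg
    have htm : TendstoInMeasure μ (fun n => (f n : Ω → EuclideanSpace ℂ (Fin d)))
        Filter.atTop (g : Ω → EuclideanSpace ℂ (Fin d)) :=
      tendstoInMeasure_of_tendsto_Lp hfg
    obtain ⟨ns, -, hae⟩ := htm.exists_seq_tendsto_ae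
    have hall : ∀ᵐ t ∂μ, ∀ n, ∃ v : Fin d → ℂ, (D t) *ᵥ v
        = WithLp.equiv 2 (Fin d → ℂ) (f n t) := ae_all_iff.2 hf
    filter_upwards [hae, hall] with t ht hmem
    have hclosed : IsClosed (LinearMap.range (Matrix.mulVecLin (D t)) : Set (Fin d → ℂ)) :=
      Submodule.closed_of_finiteDimensional _
    have hmem' : ∀ n, WithLp.equiv 2 (Fin d → ℂ) (f (ns n) t)
        ∈ LinearMap.range (Matrix.mulVecLin (D t)) := fun n => by
      obtain ⟨v, hv⟩ := hmem (ns n); exact ⟨v, hv⟩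
    have hcont : Filter.Tendsto (fun n => WithLp.equiv 2 (Fin d → ℂ) (f (ns n) t))
        Filter.atTop (nhds (WithLp.equiv 2 (Fin d → ℂ) (g t))) := by
      have : Continuous (WithLp.equiv 2 (Fin d → ℂ)) := by
        exact (PiLp.continuousLinearEquiv 2 ℂ (fun _ : Fin d => ℂ)).continuous
      exact (this.tendsto _).comp ht
    have := hclosed.mem_of_tendsto hcont (Filter.Eventually.of_forall hmem')
    obtain ⟨v, hv⟩ := this
    exact ⟨v, hv⟩
  · -- zero
    filter_upwards [Lp.coeFn_zero (EuclideanSpace ℂ (Fin d)) 2 μ] with t ht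
    refine ⟨0, ?_⟩
    rw [ht]
    simp [WithLp.ofLp_zero]
  · -- add
    intro g₁ g₂ h₁ h₂
    filter_upwards [h₁, h₂, Lp.coeFn_add g₁ g₂] with t ⟨v₁, hv₁⟩ ⟨v₂, hv₂⟩ hadd
    refine ⟨v₁ + v₂, ?_⟩
    rw [hadd]
    simp [Matrix.mulVec_add, hv₁, hv₂, WithLp.ofLp_add]
  · -- smul
    intro c g₁ h₁
    filter_upwards [h₁, Lp.coeFn_smul c g₁] with t ⟨v₁, hv₁⟩ hsmul
    refine ⟨c • v₁, ?_⟩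
    rw [hsmul]
    simp [Matrix.mulVec_smul, hv₁, WithLp.ofLp_smul]
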